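/- Let n, r be positive integers and c, d integers, with 𝒹₁ = gcd(c−d, n) and 𝒹₂ = gcd(c+(r−1)d, n). Then 𝒹₁^{r−1} · gcd(𝒹₂, d·n/𝒹₁) = (𝒹₁^{r−1}·𝒹₂/n) · gcd(n/𝒹₁, n/𝒹₂, r) · lcm(n/gcd(r,n), gcd(𝒹₂, d·n/𝒹₁)). -/

import Mathlib

theorem stmt_8 (n r : ℕ) (hn : 0 < n) (hr : 0 < r) (c d : ℤ) :
    ((Int.gcd (c - d) n : ℚ)) ^ (r - 1) *
      ((Int.gcd ((Int.gcd (c + (r - 1) * d) n : ℤ))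
        (d * n / (Int.gcd (c - d) n : ℤ)) : ℕ) : ℚ)
    = ((Int.gcd (c - d) n : ℚ)) ^ (r - 1) * (Int.gcd (c + (r - 1) * d) n : ℚ) / (n : ℚ) *
      ((Nat.gcd (Nat.gcd (n / Int.gcd (c - d) n) (n / Int.gcd (c + (r - 1) * d) n)) r : ℕ) : ℚ) *
      ((Nat.lcm (n / Nat.gcd r n)
        (Int.gcd ((Int.gcd (c + (r - 1) * d) n : ℤ))
          (d * n / (Int.gcd (c - d) n : ℤ))) : ℕ) : ℚ) := by
  have hnz : n ≠ 0 := hn.ne'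
  have hrz : r ≠ 0 := hr.ne'
  set x : ℤ := c - d with hxdef
  set y : ℤ := c + (r - 1) * d with hydef
  have hyx : y = x + r * d := by rw [hxdef, hydef]; ring
  set D1 : ℕ := Int.gcd x n with hD1def
  set D2 : ℕ := Int.gcd y n with hD2def
  have hD1n : D1 ∣ n := Int.natCast_dvd_natCast.mp (Int.gcd_dvd_right _ _)
  have hD2n : D2 ∣ n := Int.natCast_dvd_natCast.mp (Int.gcd_dvd_right _ _)
  have hD1z : D1 ≠ 0 := fun h =>
    hnz (by exact_mod_cast (Int.gcd_eq_zero_iff.mp (hD1def ▸ h)).2)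
  have hD2z : D2 ≠ 0 := fun h =>
    hnz (by exact_mod_cast (Int.gcd_eq_zero_iff.mp (hD2def ▸ h)).2)
  set e : ℕ := d.natAbs with hedef
  set a : ℕ := n / D1 with hadef
  set b : ℕ := n / D2 with hbdef
  have haz : a ≠ 0 := Nat.div_ne_zero_iff_of_dvd hD1n |>.mpr ⟨hnz, hD1z⟩
  have hbz : b ≠ 0 := Nat.div_ne_zero_iff_of_dvd hD2n |>.mpr ⟨hnz, hD2z⟩
  set g : ℕ := Nat.gcd D2 (e * a) with hgdef
  have hgz : g ≠ 0 := fun h => hD2z (Nat.eq_zero_of_gcd_eq_zero_left h)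
  set m : ℕ := n / Nat.gcd r n with hmdef
  have hkn : Nat.gcd r n ∣ n := Nat.gcd_dvd_right r n
  have hmz : m ≠ 0 :=
    Nat.div_ne_zero_iff_of_dvd hkn |>.mpr ⟨hnz, fun h => hrz (Nat.eq_zero_of_gcd_eq_zero_left h)⟩
  -- identify the Int.gcd expression with g
  have hg' : Int.gcd (D2 : ℤ) (d * n / (D1 : ℤ)) = g := by
    have h1 : (D1 : ℤ) ∣ (n : ℤ) := Int.natCast_dvd_natCast.mpr hD1n
    rw [Int.mul_ediv_assoc _ h1, show (n : ℤ) / (D1 : ℤ) = ((a : ℕ) : ℤ) from rfl]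
    simp [Int.gcd, Int.natAbs_mul, hgdef, hedef]
  -- key natural number identity
  have key : n * g = D2 * (Nat.gcd (Nat.gcd a b) r * Nat.lcm m g) := by
    have hG : Nat.gcd (Nat.gcd a b) r ≠ 0 := fun h => hrz (Nat.eq_zero_of_gcd_eq_zero_right h)
    have hL : Nat.lcm m g ≠ 0 := Nat.lcm_ne_zero hmz hgz
    apply Nat.eq_of_factorization_eq (Nat.mul_ne_zero hnz hgz)
      (Nat.mul_ne_zero hD2z (Nat.mul_ne_zero hG hL))
    intro p
    by_cases hp : p.Prime
    · set N := n.factorization p with hN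
      set A := D1.factorization p with hA
      set B := D2.factorization p with hB
      set R := r.factorization p with hR
      have hAN : A ≤ N :=
        (hp.pow_dvd_iff_le_factorization hnz).mp ((Nat.ordProj_dvd D1 p).trans hD1n)
      have hBN : B ≤ N :=
        (hp.pow_dvd_iff_le_factorization hnz).mp ((Nat.ordProj_dvd D2 p).trans hD2n)
      have hva : a.factorization p = N - A := by
        rw [hadef, Nat.factorization_div hD1n]
        all_goals rw [Finsupp.tsub_apply]
      have hvb : b.factorization p = N - B := by
        rw [hbdef, Nat.factorization_div hD2n]
        all_goals rw [Finsupp.tsub_apply]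
      have hvk : (Nat.gcd r n).factorization p = min R N := by
        rw [Nat.factorization_gcd hrz hnz, Finsupp.inf_apply]
        all_goals rfl
      have hvm : m.factorization p = N - min R N := by
        rw [hmdef, Nat.factorization_div hkn]
        all_goals rw [Finsupp.tsub_apply, hvk]
      have hpAx : ((p ^ A : ℕ) : ℤ) ∣ x :=
        dvd_trans (Int.natCast_dvd_natCast.mpr (Nat.ordProj_dvd D1 p)) (Int.gcd_dvd_left _ _)
      have hpBy : ((p ^ B : ℕ) : ℤ) ∣ y :=
        dvd_trans (Int.natCast_dvd_natCast.mpr (Nat.ordProj_dvd D2 p)) (Int.gcd_dvd_left _ _)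
      set δ : ℕ := if d = 0 then N else e.factorization p with hδdef
      have hvg : g.factorization p = min B (δ + (N - A)) := by
        by_cases hd : d = 0
        · have he0 : e = 0 := by simp [hedef, hd]
          rw [hgdef, he0, zero_mul, Nat.gcd_zero_right, ← hB, hδdef, if_pos hd]
          omega
        · have hez : e ≠ 0 := fun h => hd (Int.natAbs_eq_zero.mp h)
          rw [hgdef, Nat.factorization_gcd hD2z (Nat.mul_ne_zero hez haz), Finsupp.inf_apply,
            Nat.factorization_mul hez haz, Finsupp.add_apply, hva, hδdef, if_neg hd, ← hB]
          all_goals rfl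
      have hcon : min A (R + δ) ≤ B ∧ min B (R + δ) ≤ A ∧ ¬(R + δ < A ∧ R + δ < B) := by
        by_cases hd : d = 0
        · have hxy : x = y := by rw [hxdef, hydef, hd]; ring
          have hAB : A = B := by rw [hA, hB, hD1def, hD2def, hxy]
          have hδN : δ = N := by rw [hδdef, if_pos hd]
          refine ⟨?_, ?_, ?_⟩ <;> omega
        · have hez : e ≠ 0 := fun h => hd (Int.natAbs_eq_zero.mp h)
          have hδe : δ = e.factorization p := by rw [hδdef, if_neg hd]
          have hre : (r * e) ≠ 0 := Nat.mul_ne_zero hrz hez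
          have hvre : (r * e).factorization p = R + δ := by
            rw [Nat.factorization_mul hrz hez, Finsupp.add_apply, hδe, ← hR]
          have hnab : ((r : ℤ) * d).natAbs = r * e := by
            rw [Int.natAbs_mul, hedef]; simp
          have hprd : ((p ^ (R + δ) : ℕ) : ℤ) ∣ (r : ℤ) * d := by
            have h1 : p ^ (R + δ) ∣ r * e := by
              rw [← hvre]; exact Nat.ordProj_dvd _ p
            exact Int.dvd_natAbs.mp (hnab ▸ Int.natCast_dvd_natCast.mpr h1)
          have hpn : ∀ k : ℕ, k ≤ N → ((p ^ k : ℕ) : ℤ) ∣ (n : ℤ) := fun k hk =>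
            Int.natCast_dvd_natCast.mpr ((pow_dvd_pow p hk).trans (Nat.ordProj_dvd n p))
          refine ⟨?_, ?_, ?_⟩
          · have h1 : ((p ^ min A (R + δ) : ℕ) : ℤ) ∣ y := by
              rw [hyx]
              exact dvd_add
                (dvd_trans (Int.natCast_dvd_natCast.mpr (pow_dvd_pow p (min_le_left _ _))) hpAx)
                (dvd_trans (Int.natCast_dvd_natCast.mpr (pow_dvd_pow p (min_le_right _ _))) hprd)
            have h2 := Int.dvd_coe_gcd h1 (hpn _ (le_trans (min_le_left _ _) hAN))
            rw [← hD2def] at h2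
            exact (hp.pow_dvd_iff_le_factorization hD2z).mp (Int.natCast_dvd_natCast.mp h2)
          · have h1 : ((p ^ min B (R + δ) : ℕ) : ℤ) ∣ x := by
              have hxy2 : x = y - r * d := by rw [hyx]; ring
              rw [hxy2]
              exact dvd_sub
                (dvd_trans (Int.natCast_dvd_natCast.mpr (pow_dvd_pow p (min_le_left _ _))) hpBy)
                (dvd_trans (Int.natCast_dvd_natCast.mpr (pow_dvd_pow p (min_le_right _ _))) hprd)
            have h2 := Int.dvd_coe_gcd h1 (hpn _ (le_trans (min_le_left _ _) hBN))
            rw [← hD1def] at h2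
            exact (hp.pow_dvd_iff_le_factorization hD1z).mp (Int.natCast_dvd_natCast.mp h2)
          · rintro ⟨h1, h2⟩
            have hx1 : ((p ^ (R + δ + 1) : ℕ) : ℤ) ∣ x :=
              dvd_trans (Int.natCast_dvd_natCast.mpr (pow_dvd_pow p h1)) hpAx
            have hy1 : ((p ^ (R + δ + 1) : ℕ) : ℤ) ∣ y :=
              dvd_trans (Int.natCast_dvd_natCast.mpr (pow_dvd_pow p h2)) hpBy
            have hrd : ((p ^ (R + δ + 1) : ℕ) : ℤ) ∣ (r : ℤ) * d := by
              have hxy3 : (r : ℤ) * d = y - x := by rw [hyx]; ring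
              rw [hxy3]; exact dvd_sub hy1 hx1
            have h3 : p ^ (R + δ + 1) ∣ r * e := by
              have h4 := Int.natAbs_dvd_natAbs.mpr hrd
              rwa [hnab, Int.natAbs_natCast] at h4
            have h5 := (hp.pow_dvd_iff_le_factorization hre).mp h3
            rw [hvre] at h5
            omega
      obtain ⟨h1, h2, h3⟩ := hcon
      rw [Nat.factorization_mul hnz hgz, Finsupp.add_apply,
        Nat.factorization_mul hD2z (Nat.mul_ne_zero hG hL), Finsupp.add_apply,
        Nat.factorization_mul hG hL, Finsupp.add_apply,
        Nat.factorization_gcd (fun h => haz (Nat.eq_zero_of_gcd_eq_zero_left h)) hrz,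
        Finsupp.inf_apply,
        Nat.factorization_gcd haz hbz, Finsupp.inf_apply,
        Nat.factorization_lcm hmz hgz, Finsupp.sup_apply,
        hva, hvb, hvm, hvg, ← hN, ← hB, ← hR]
      omega
    · simp [Nat.factorization_eq_zero_of_not_prime _ hp]
  -- conclude over ℚ
  rw [hg']
  have hnQ : (n : ℚ) ≠ 0 := Nat.cast_ne_zero.mpr hnz
  have keyQ : (n : ℚ) * g = (D2 : ℚ) * ((Nat.gcd (Nat.gcd a b) r : ℚ) * (Nat.lcm m g : ℚ)) := by
    exact_mod_cast key
  field_simp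
  linear_combination keyQ
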